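/- (Sensitivity of g, part of Claim F) Let δ = 1/2 + (1/4)·∑_{k≥0} ω_k/2^k with (ω_k) the Fibonacci word, and let C ⊂ [0,1] be the Cantor set on which every g-orbit starting in C has ω-limit set equal to C. Then for every t_0 ∈ C and every ε > 0 there exist s_0 ∈ [0,1] and k ∈ ℕ with |s_0 − t_0| ≤ ε and |g^k(s_0) − g^k(t_0)| ≥ 1/2; that is, g has sensitive dependence on initial conditions at every point of C with sensitivity constant 1/2. -/

import Mathlib

/-- The golden ratio `φ = (1 + √5)/2`. -/
noncomputable def goldenPhi : ℝ := (1 + Real.sqrt 5) / 2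

/-- The `i`-th letter of the Fibonacci word:
`ω_i = 2 + ⌊(i+1)φ⌋ − ⌊(i+2)φ⌋`. -/
noncomputable def fibWord (i : ℕ) : ℤ :=
  2 + ⌊((i : ℝ) + 1) * goldenPhi⌋ - ⌊((i : ℝ) + 2) * goldenPhi⌋

/-- `δ = 1/2 + (1/4)·∑_{k≥0} ω_k / 2^k`. -/
noncomputable def fibDelta : ℝ :=
  1 / 2 + (1 / 4) * ∑' k : ℕ, (fibWord k : ℝ) / 2 ^ k

/-- The piecewise-affine map `g : [0,1] → [0,1]`:
`g(t) = t/2 + δ` on `[0, 2(1−δ))` and `g(t) = t/2 + δ − 1` on `[2(1−δ), 1]`. -/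
noncomputable def gMap (δ : ℝ) (t : ℝ) : ℝ :=
  if t < 2 * (1 - δ) then t / 2 + δ else t / 2 + δ - 1

/-- A Cantor set: a nonempty compact set that is perfect and totally disconnected. -/
def IsCantorSet {X : Type*} [TopologicalSpace X] (C : Set X) : Prop :=
  C.Nonempty ∧ IsCompact C ∧ Perfect C ∧ IsTotallyDisconnected C

/-- The ω-limit set of `x` under `f`: all limits of subsequences of the orbit. -/
def omegaLimitSet {X : Type*} [TopologicalSpace X] (f : X → X) (x : X) : Set X :=
  {p | ∃ φ : ℕ → ℕ, StrictMono φ ∧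
    Filter.Tendsto (fun k => f^[φ k] x) Filter.atTop (nhds p)}

lemma goldenPhi_bounds : 1 < goldenPhi ∧ goldenPhi < 2 := by
  have h1 : (1:ℝ) < Real.sqrt 5 :=
    (Real.lt_sqrt (x := 1) (y := 5) (by norm_num)).mpr (by norm_num)
  have h2 : Real.sqrt 5 < 3 := (Real.sqrt_lt' (y := 3) (by norm_num)).mpr (by norm_num)
  constructor <;> (unfold goldenPhi; linarith)

lemma fibWord_mem (i : ℕ) : (0:ℤ) ≤ fibWord i ∧ fibWord i ≤ 1 := by
  obtain ⟨h1, h2⟩ := goldenPhi_bounds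
  have key : ((i : ℝ) + 2) * goldenPhi = ((i : ℝ) + 1) * goldenPhi + goldenPhi := by ring
  set x := ((i : ℝ) + 1) * goldenPhi with hx
  have hlo : ⌊x⌋ + 1 ≤ ⌊x + goldenPhi⌋ := by
    have : ⌊x + 1⌋ ≤ ⌊x + goldenPhi⌋ := Int.floor_le_floor (by linarith)
    simpa [Int.floor_add_one] using this
  have hhi : ⌊x + goldenPhi⌋ ≤ ⌊x⌋ + 2 := by
    have h3 : ⌊x + goldenPhi⌋ ≤ ⌊x + (2:ℤ)⌋ := Int.floor_le_floor (by push_cast; linarith)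
    rwa [Int.floor_add_intCast x 2] at h3
  constructor <;> (unfold fibWord; rw [key, ← hx]; omega)

lemma fibSum_mem : 0 ≤ (∑' k : ℕ, (fibWord k : ℝ) / 2 ^ k) ∧
    (∑' k : ℕ, (fibWord k : ℝ) / 2 ^ k) ≤ 2 := by
  have hterm : ∀ k : ℕ, 0 ≤ (fibWord k : ℝ) / 2 ^ k ∧ (fibWord k : ℝ) / 2 ^ k ≤ (1/2) ^ k := by
    intro k
    obtain ⟨h0, h1⟩ := fibWord_mem k
    have hp : (0:ℝ) < 2 ^ k := by positivity
    constructor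
    · apply div_nonneg _ (le_of_lt hp); exact_mod_cast h0
    · rw [div_pow, one_pow, div_le_div_iff₀ hp hp, one_mul]
      have : (fibWord k : ℝ) ≤ 1 := by exact_mod_cast h1
      nlinarith
  have hsum : Summable (fun k : ℕ => (fibWord k : ℝ) / 2 ^ k) :=
    Summable.of_nonneg_of_le (fun k => (hterm k).1) (fun k => (hterm k).2) summable_geometric_two
  constructor
  · exact tsum_nonneg (fun k => (hterm k).1)
  · calc (∑' k : ℕ, (fibWord k : ℝ) / 2 ^ k) ≤ ∑' k : ℕ, ((1:ℝ)/2) ^ k :=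
        Summable.tsum_le_tsum (fun k => (hterm k).2) hsum summable_geometric_two
      _ = 2 := tsum_geometric_two

lemma fibDelta_bounds : 1/2 ≤ fibDelta ∧ fibDelta ≤ 1 := by
  obtain ⟨h0, h1⟩ := fibSum_mem
  unfold fibDelta; constructor <;> linarith

lemma gMap_mem {δ : ℝ} (hδ : 1/2 ≤ δ ∧ δ ≤ 1) {t : ℝ} (ht : t ∈ Set.Icc (0:ℝ) 1) :
    gMap δ t ∈ Set.Icc (0:ℝ) 1 := by
  obtain ⟨h1, h2⟩ := hδ
  obtain ⟨ht0, ht1⟩ := ht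
  unfold gMap
  split_ifs with h
  · constructor <;> linarith
  · push_neg at h
    constructor <;> linarith

lemma gMap_iter_mem {δ : ℝ} (hδ : 1/2 ≤ δ ∧ δ ≤ 1) {t : ℝ} (ht : t ∈ Set.Icc (0:ℝ) 1) (k : ℕ) :
    (gMap δ)^[k] t ∈ Set.Icc (0:ℝ) 1 := by
  induction k with
  | zero => simpa
  | succ n ih => rw [Function.iterate_succ_apply']; exact gMap_mem hδ ih

lemma gMap_sync {δ : ℝ} {s s' : ℝ}
    (h : ∀ k, ((gMap δ)^[k] s < 2 * (1 - δ) ↔ (gMap δ)^[k] s' < 2 * (1 - δ))) (k : ℕ) :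
    (gMap δ)^[k] s' - (gMap δ)^[k] s = (s' - s) / 2 ^ k := by
  induction k with
  | zero => simp
  | succ n ih =>
    rw [Function.iterate_succ_apply', Function.iterate_succ_apply']
    set x := (gMap δ)^[n] s with hxdef
    set y := (gMap δ)^[n] s' with hydef
    have gx : gMap δ x = if x < 2 * (1 - δ) then x / 2 + δ else x / 2 + δ - 1 := rfl
    have gy : gMap δ y = if y < 2 * (1 - δ) then y / 2 + δ else y / 2 + δ - 1 := rfl
    rw [gx, gy]
    rcases lt_or_ge x (2 * (1 - δ)) with hc | hc
    · rw [if_pos hc, if_pos ((h n).mp hc)]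
      rw [pow_succ, ← div_div, ← ih]; ring
    · rw [if_neg (not_lt.mpr hc), if_neg (fun hl => (not_lt.mpr hc) ((h n).mpr hl))]
      rw [pow_succ, ← div_div, ← ih]; ring

/-- Sensitivity of `g` (part of Claim F): with `δ` built from the Fibonacci word, if
`C ⊆ [0,1]` is a Cantor set such that every `g`-orbit starting in `C` has ω-limit set
equal to `C`, then `g` has sensitive dependence on initial conditions at every point of
`C` with sensitivity constant `1/2`: for all `t₀ ∈ C` and `ε > 0` there exist
`s₀ ∈ [0,1]` and `k ∈ ℕ` with `|s₀ − t₀| ≤ ε` and `|g^k(s₀) − g^k(t₀)| ≥ 1/2`. -/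
theorem gMap_sensitive (C : Set ℝ) (hCsub : C ⊆ Set.Icc (0 : ℝ) 1)
    (hCantor : IsCantorSet C)
    (homega : ∀ t₀ ∈ C, omegaLimitSet (gMap fibDelta) t₀ = C) :
    ∀ t₀ ∈ C, ∀ ε > (0 : ℝ), ∃ s₀ ∈ Set.Icc (0 : ℝ) 1, ∃ k : ℕ,
      |s₀ - t₀| ≤ ε ∧
      1 / 2 ≤ |(gMap fibDelta)^[k] s₀ - (gMap fibDelta)^[k] t₀| := by
  intro t₀ ht₀ ε hε
  set δ := fibDelta with hδdef
  have hδ := fibDelta_bounds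
  set g := gMap fibDelta with hgdef
  set c := 2 * (1 - δ) with hcdef
  have ht₀I : t₀ ∈ Set.Icc (0:ℝ) 1 := hCsub ht₀
  set u : ℕ → ℝ := fun k => g^[k] t₀ with hudef
  by_cases hsplit : ∀ s, s ∈ Set.Icc (0:ℝ) 1 → |s - t₀| < ε →
      ∀ k, (g^[k] s < c ↔ g^[k] t₀ < c)
  · -- no split: derive a contradiction
    exfalso
    -- C is infinite
    have hCinf : ¬ C.Finite := by
      intro hfin
      have hacc := hCantor.2.2.1.acc t₀ ht₀
      rw [accPt_iff_nhds] at hacc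
      have hU : (C \ {t₀})ᶜ ∈ nhds t₀ := by
        apply IsOpen.mem_nhds
        · exact (Set.Finite.isClosed (hfin.subset Set.diff_subset)).isOpen_compl
        · simp
      obtain ⟨y, ⟨hyU, hyC⟩, hyne⟩ := hacc _ hU
      exact hyU ⟨hyC, hyne⟩
    -- find q ∈ C with 0 < |q - t₀| < ε
    have hacc := hCantor.2.2.1.acc t₀ ht₀
    rw [accPt_iff_nhds] at hacc
    obtain ⟨q, ⟨hqball, hqC⟩, hqne⟩ := hacc (Metric.ball t₀ ε) (Metric.ball_mem_nhds _ hε)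
    rw [Metric.mem_ball, Real.dist_eq] at hqball
    set η := ε - |q - t₀| with hηdef
    have hη : 0 < η := by simp [hηdef]; linarith
    -- orbit of t₀ visits near q
    have hqω : q ∈ omegaLimitSet g t₀ := by rw [homega t₀ ht₀]; exact hqC
    obtain ⟨ψ, hψ, htend⟩ := hqω
    rw [Metric.tendsto_atTop] at htend
    obtain ⟨J, hJ⟩ := htend η hη
    set n := ψ (max J 1) with hndef
    have hn1 : 1 ≤ n := le_trans (le_max_right J 1) (hψ.le_apply)
    have hunq : |u n - q| < η := by
      have := hJ (max J 1) (le_max_left J 1)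
      rwa [Real.dist_eq] at this
    have hunI : u n ∈ Set.Icc (0:ℝ) 1 := gMap_iter_mem hδ ht₀I n
    have hunε : |u n - t₀| < ε := by
      calc |u n - t₀| ≤ |u n - q| + |q - t₀| := abs_sub_le (u n) q t₀
        _ < η + |q - t₀| := by linarith
        _ = ε := by simp [hηdef]
    set a := u n - t₀ with hadef
    -- synchronization
    have hkey : ∀ k, u (k + n) = u k + a / 2 ^ k := by
      intro k
      have hs : ∀ m, (g^[m] t₀ < c ↔ g^[m] (u n) < c) := by
        intro m
        exact (hsplit (u n) hunI hunε m).symm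
      have := gMap_sync (δ := fibDelta) (s := t₀) (s' := u n) hs k
      have hiter : g^[k] (u n) = u (k + n) := by
        rw [hudef]
        exact (Function.iterate_add_apply g k n t₀).symm
      rw [hiter] at this
      linarith [this]
    -- the limit function
    have h2n : (2:ℝ) ≤ 2 ^ n := by
      calc (2:ℝ) = 2 ^ 1 := (pow_one 2).symm
        _ ≤ 2 ^ n := pow_le_pow_right₀ (by norm_num) hn1
    have h2n' : (2:ℝ) ^ n - 1 ≠ 0 := by linarith
    set c₀ : ℝ := 2 ^ n / (2 ^ n - 1) with hc₀def
    set L : ℕ → ℝ := fun k => u k + a / 2 ^ k * c₀ with hLdef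
    have hper : ∀ k, L (k + n) = L k := by
      intro k
      simp only [hLdef]
      rw [hkey k, pow_add]
      have hk0 : (2:ℝ) ^ k ≠ 0 := by positivity
      have hn0 : (2:ℝ) ^ n ≠ 0 := by positivity
      rw [hc₀def]
      field_simp
      ring
    have hmod : ∀ m, L m = L (m % n) := by
      intro m
      induction m using Nat.strong_induction_on with
      | _ m ih =>
        by_cases hm : m < n
        · rw [Nat.mod_eq_of_lt hm]
        · push_neg at hm
          have hsub : m - n + n = m := Nat.sub_add_cancel hm
          have h1 : L m = L (m - n) := by
            have := hper (m - n); rwa [hsub] at this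
          have h2 : L (m - n) = L ((m - n) % n) := ih (m - n) (by omega)
          rw [h1, h2, Nat.mod_eq_sub_mod hm]
    -- F: finite set of limit points
    set F : Set ℝ := Set.range (fun r : Fin n => L r.val) with hFdef
    have hFfin : F.Finite := Set.finite_range _
    have hLF : ∀ m, L m ∈ F := by
      intro m
      rw [hmod m]
      exact ⟨⟨m % n, Nat.mod_lt _ (by omega)⟩, rfl⟩
    -- error bound
    have herr : ∀ m, |L m - u m| ≤ 2 * |a| / 2 ^ m := by
      intro m
      have : L m - u m = a / 2 ^ m * c₀ := by simp only [hLdef]; ring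
      rw [this, abs_mul, abs_div, abs_pow, abs_two]
      have hc₀pos : 0 ≤ c₀ := by
        rw [hc₀def]; apply div_nonneg (by positivity) (by linarith)
      have hc₀le : c₀ ≤ 2 := by
        rw [hc₀def, div_le_iff₀ (by linarith)]; linarith
      rw [abs_of_nonneg hc₀pos]
      calc |a| / 2 ^ m * c₀ ≤ |a| / 2 ^ m * 2 :=
            mul_le_mul_of_nonneg_left hc₀le (by positivity)
        _ = 2 * |a| / 2 ^ m := by ring
    -- C ⊆ F
    have hCF : C ⊆ F := by
      intro p hp
      rw [← homega t₀ ht₀] at hp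
      obtain ⟨ψ', hψ', htend'⟩ := hp
      have htendL : Filter.Tendsto (fun j => L (ψ' j)) Filter.atTop (nhds p) := by
        have hdiff : Filter.Tendsto (fun j => L (ψ' j) - u (ψ' j)) Filter.atTop (nhds 0) := by
          apply squeeze_zero_norm (fun j => (herr (ψ' j)))
          have : Filter.Tendsto (fun j : ℕ => 2 * |a| / 2 ^ j) Filter.atTop (nhds 0) := by
            have := tendsto_pow_atTop_nhds_zero_of_lt_one
              (show (0:ℝ) ≤ 1/2 by norm_num) (show (1:ℝ)/2 < 1 by norm_num)
            have h2 := this.const_mul (2 * |a|)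
            simp only [mul_zero] at h2
            convert h2 using 2 with j
            rw [div_eq_mul_inv, one_div, inv_pow]
          apply squeeze_zero_norm _ this
          intro j
          rw [Real.norm_eq_abs, abs_of_nonneg (by positivity)]
          exact div_le_div_of_nonneg_left (by positivity) (by positivity)
            (pow_le_pow_right₀ (by norm_num) (hψ'.le_apply))
        have := hdiff.add htend'
        simp only [hudef, sub_add_cancel, zero_add] at this
        exact this
      exact hFfin.isClosed.mem_of_tendsto htendL
        (Filter.Eventually.of_forall (fun j => hLF (ψ' j)))
    exact hCinf (hFfin.subset hCF)
  · -- split happens: sensitivity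
    push_neg at hsplit
    obtain ⟨s₀, hs₀I, hs₀ε, k, hk⟩ := hsplit
    refine ⟨s₀, hs₀I, k + 1, le_of_lt hs₀ε, ?_⟩
    rw [Function.iterate_succ_apply', Function.iterate_succ_apply']
    have hx : g^[k] s₀ ∈ Set.Icc (0:ℝ) 1 := gMap_iter_mem hδ hs₀I k
    have hy : g^[k] t₀ ∈ Set.Icc (0:ℝ) 1 := gMap_iter_mem hδ ht₀I k
    set x := g^[k] s₀ with hxdef
    set y := g^[k] t₀ with hydef
    have gx : g x = if x < c then x / 2 + δ else x / 2 + δ - 1 := rfl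
    have gy : g y = if y < c then y / 2 + δ else y / 2 + δ - 1 := rfl
    rw [gx, gy]
    obtain ⟨hx0, hx1⟩ := hx
    obtain ⟨hy0, hy1⟩ := hy
    obtain ⟨h05, h11⟩ := hδ
    rcases hk with ⟨hxc, hyc⟩ | ⟨hxc, hyc⟩
    · rw [if_pos hxc, if_neg (not_lt.mpr hyc)]
      rw [abs_of_nonneg (by linarith)]
      linarith
    · rw [if_neg (not_lt.mpr hxc), if_pos hyc]
      rw [abs_of_nonpos (by linarith)]
      linarith
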